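/- Let M be a countable structure satisfying Hypothesis (H). Then PS(M), the collection of pointwise stabilizers of finite Galois-algebraically closed sets, equals the set of those H ∈ GS(M) for which there is no H' ∈ GS(M) with H' ⊊ H, H' ⊴ H and [H : H'] < ω. -/

import Mathlib

open FirstOrder

namespace Paper

variable (L : FirstOrder.Language) (M : Type*) [L.Structure M]

/-- The group of automorphisms of a first-order structure, with composition. -/
instance autGroup : Group (M ≃[L] M) where
  one := FirstOrder.Language.Equiv.refl L M
  mul f g := f.comp g
  inv := FirstOrder.Language.Equiv.symm
  mul_assoc _ _ _ := rfl
  one_mul f := FirstOrder.Language.Equiv.ext fun a => by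
    show (FirstOrder.Language.Equiv.refl L M).comp f a = f a; simp
  mul_one f := FirstOrder.Language.Equiv.ext fun a => by
    show f.comp (FirstOrder.Language.Equiv.refl L M) a = f a; simp
  inv_mul_cancel f := FirstOrder.Language.Equiv.ext fun a => by
    show f.symm.comp f a = FirstOrder.Language.Equiv.refl L M a; simp

@[simp] theorem aut_one_apply (a : M) : (1 : M ≃[L] M) a = a := by
  show FirstOrder.Language.Equiv.refl L M a = a; simp
@[simp] theorem aut_mul_apply (f g : M ≃[L] M) (a : M) : (f * g) a = f (g a) := rfl
@[simp] theorem aut_inv_apply (f : M ≃[L] M) (a : M) : f⁻¹ a = f.symm a := rfl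
@[simp] theorem aut_coe_mul (f g : M ≃[L] M) : ⇑(f * g) = ⇑f ∘ ⇑g := rfl

/-- The natural action of the automorphism group on the structure. -/
instance autAction : MulAction (M ≃[L] M) M where
  smul f a := f a
  one_smul _ := rfl
  mul_smul _ _ _ := rfl

@[simp] theorem aut_smul_def (f : M ≃[L] M) (a : M) : f • a = f a := rfl

/-- The topology of pointwise convergence on the automorphism group (the domain
being regarded as discrete). -/
instance autTopology : TopologicalSpace (M ≃[L] M) :=
  letI : TopologicalSpace M := ⊥
  TopologicalSpace.induced (fun g => (g : M → M)) Pi.topologicalSpace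

/-- The pointwise stabilizer `G_(A)` of a set `A ⊆ M` in `Aut(M)`. -/
def pstab (A : Set M) : Subgroup (M ≃[L] M) where
  carrier := {g | ∀ a ∈ A, g a = a}
  one_mem' := fun _ _ => rfl
  mul_mem' := by
    intro f g hf hg a ha
    simp only [Set.mem_setOf_eq] at *
    rw [aut_mul_apply, hg a ha, hf a ha]
  inv_mem' := by
    intro f hf a ha
    simp only [Set.mem_setOf_eq] at *
    rw [aut_inv_apply]
    conv_lhs => rw [← hf a ha]
    exact f.symm_apply_apply a

/-- The setwise stabilizer `G_{A}` of a set `A ⊆ M` in `Aut(M)`. -/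
def sstab (A : Set M) : Subgroup (M ≃[L] M) where
  carrier := {g | g '' A = A}
  one_mem' := by
    simp only [Set.mem_setOf_eq]
    ext a; simp [Set.mem_image]
  mul_mem' := by
    intro f g hf hg
    simp only [Set.mem_setOf_eq] at *
    rw [aut_coe_mul, Set.image_comp, hg, hf]
  inv_mem' := by
    intro f hf
    simp only [Set.mem_setOf_eq] at *
    conv_lhs => rw [← hf]
    rw [Set.image_image]
    ext a; constructor
    · rintro ⟨x, hx, rfl⟩
      simpa [f.symm_apply_apply] using hx
    · intro ha
      exact ⟨a, ha, f.symm_apply_apply a⟩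

/-- The Galois-algebraic closure of `A ⊆ M`: the set of elements with finite orbit
under the pointwise stabilizer of `A`. -/
def aclg (A : Set M) : Set M :=
  {b | (MulAction.orbit (pstab L M A) b).Finite}

/-- The Galois-definable closure of the empty set: elements fixed by every automorphism. -/
def dclg0 : Set M := {b | ∀ g : M ≃[L] M, g b = b}

/-- `p : K ≃ K'` is an isomorphism between the induced substructures on `K` and `K'`. -/
def IsPartialIso (K K' : Set M) (p : K ≃ K') : Prop :=
  (∀ {n : ℕ} (f : L.Functions n) (x : Fin n → K),
      ∃ h : FirstOrder.Language.Structure.funMap f (fun i => (x i : M)) ∈ K,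
        (p ⟨FirstOrder.Language.Structure.funMap f (fun i => (x i : M)), h⟩ : M) =
          FirstOrder.Language.Structure.funMap f (fun i => (p (x i) : M))) ∧
  (∀ {n : ℕ} (r : L.Relations n) (x : Fin n → K),
      FirstOrder.Language.Structure.RelMap r (fun i => (x i : M)) ↔
        FirstOrder.Language.Structure.RelMap r (fun i => (p (x i) : M)))

/-- `A(M)`: the collection of Galois-algebraic closures of finite subsets of `M`. -/
def AA : Set (Set M) := {K | ∃ A : Set M, A.Finite ∧ K = aclg L M A}

/-- Hypothesis (H). -/
structure HypH : Prop where
  countable : Countable M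
  locallyFinite : ∀ A : Set M, A.Finite → (aclg L M A).Finite
  extendsIso : ∀ (K K' : Set M), K.Finite → K'.Finite →
    aclg L M K = K → aclg L M K' = K' → ∀ p : K ≃ K', IsPartialIso L M K K' p →
      ∃ g : M ≃[L] M, ∀ a : K, g a = (p a : M)
  openSandwich : ∀ H : Subgroup (M ≃[L] M), IsOpen (H : Set (M ≃[L] M)) →
    ∃! K : Set M, K.Finite ∧ aclg L M K = K ∧ pstab L M K ≤ H ∧ H ≤ sstab L M K


/-- Generalized pointwise stabilizer `G_(K,L)`. -/
def genStab (K : Set M) (Lsub : Subgroup (Equiv.Perm K)) : Subgroup (M ≃[L] M) where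
  carrier := {f | ∃ p ∈ Lsub, ∀ a : K, f a = (p a : M)}
  one_mem' := ⟨1, Lsub.one_mem, fun a => by simp⟩
  mul_mem' := by
    rintro f g ⟨p, hp, hfp⟩ ⟨q, hq, hgq⟩
    refine ⟨p * q, Lsub.mul_mem hp hq, fun a => ?_⟩
    rw [aut_mul_apply, hgq a, hfp (q a)]
    rfl
  inv_mem' := by
    rintro f ⟨p, hp, hfp⟩
    refine ⟨p⁻¹, Lsub.inv_mem hp, fun a => ?_⟩
    have h1 : f ((p⁻¹ a : K) : M) = ((p (p⁻¹ a) : K) : M) := hfp _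
    rw [show p (p⁻¹ a) = a from p.apply_symm_apply a] at h1
    rw [aut_inv_apply, ← h1, FirstOrder.Language.Equiv.symm_apply_apply]

/-- `GS(M)`: the collection of generalized pointwise stabilizers. -/
def GS : Set (Subgroup (M ≃[L] M)) :=
  {H | ∃ K ∈ AA L M, ∃ Lsub : Subgroup (Equiv.Perm K),
    (∀ p ∈ Lsub, IsPartialIso L M K K (p : K ≃ K)) ∧ H = genStab L M K Lsub}

/-- `PS(M)`: the collection of pointwise stabilizers of members of `A(M)`. -/
def PS : Set (Subgroup (M ≃[L] M)) := {H | ∃ K ∈ AA L M, H = pstab L M K}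

/-- The lattice `A₊(M)`. -/
def Aplus : Set (Set M) := AA L M ∪ {dclg0 L M}

/-- Covering relation in `S`. -/
def hasseCovers {α : Type*} (S : Set (Set α)) (A B : Set α) : Prop :=
  A ∈ S ∧ B ∈ S ∧ A ⊂ B ∧ ¬∃ C ∈ S, A ⊂ C ∧ C ⊂ B

/-- Adjacency in the Hasse diagram of `S`. -/
def hasseAdj {α : Type*} (S : Set (Set α)) (A B : Set α) : Prop :=
  hasseCovers S A B ∨ hasseCovers S B A

/-- `A_k(M)`: members of `A(M)` distinct from `dcl(∅)` at distance `≤ k` from the bottom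
of the lattice `A₊(M)` in its Hasse diagram. -/
def Ak (k : ℕ) : Set (Set M) :=
  {K | K ∈ AA L M ∧ K ≠ dclg0 L M ∧ ∃ (j : ℕ) (c : Fin (j + 1) → Set M), j ≤ k ∧
    c 0 = dclg0 L M ∧ c (Fin.last j) = K ∧
    ∀ i : Fin j, hasseAdj (Aplus L M) (c i.castSucc) (c i.succ)}

/-- `A_k(M)` for `k ≤ ω`, with `A_ω(M) = A(M)`. -/
def AkE (k : ℕ∞) : Set (Set M) :=
  match k with
  | ⊤ => AA L M
  | (k : ℕ) => Ak L M k

/-- `k_M`: the supremum of lengths of strict chains of Galois-algebraic closures of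
singletons. -/
noncomputable def kM : ℕ∞ :=
  ⨆ k ∈ {k : ℕ | ∃ a : Fin k → M, ∀ i j : Fin k, i < j → aclg L M {a i} ⊂ aclg L M {a j}},
    (k : ℕ∞)

/-- The domain of the expanded structure `E^ex_M(k)`: triples `(K, p, K')` with
`K, K' ∈ A_k(M)` and `p : K ≅ K'`. -/
structure ExTriple (k : ℕ∞) where
  K : Set M
  K' : Set M
  hK : K ∈ AkE L M k
  hK' : K' ∈ AkE L M k
  p : K ≃ K'
  iso : IsPartialIso L M K K' p

/-- The unary predicate of `E^ex_M(k)` holding of the identity triples. -/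
def IsIdTriple {k : ℕ∞} (t : ExTriple L M k) : Prop :=
  t.K = t.K' ∧ ∀ a : t.K, (t.p a : M) = (a : M)

/-- The `n`-ary relation `E_n` of `E^ex_M(k)`. -/
def ERel {k : ℕ∞} {n : ℕ} (x : Fin n → ExTriple L M k) : Prop :=
  ∃ g : M ≃[L] M, ∀ (i : Fin n) (a : (x i).K), g a = ((x i).p a : M)

/-- The binary relation `Dom` of `E^ex_M(k)`. -/
def DomRel {k : ℕ∞} (t s : ExTriple L M k) : Prop := IsIdTriple L M s ∧ s.K = t.K

/-- The binary relation `Cod` of `E^ex_M(k)`. -/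
def CodRel {k : ℕ∞} (t s : ExTriple L M k) : Prop := IsIdTriple L M s ∧ s.K = t.K'

variable {L M}

/-- A bijection between the domains of `E^ex_M(k)` and `E^ex_N(k)` is an isomorphism
if it preserves the identity-triple predicate, all the relations `E_n`, `Dom` and `Cod`. -/
def IsExIso {L' : FirstOrder.Language} {N : Type*} [L'.Structure N] {k : ℕ∞}
    (F : ExTriple L M k ≃ ExTriple L' N k) : Prop :=
  (∀ t, IsIdTriple L M t ↔ IsIdTriple L' N (F t)) ∧
  (∀ (n : ℕ) (x : Fin n → ExTriple L M k), ERel L M x ↔ ERel L' N (F ∘ x)) ∧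
  (∀ t s, DomRel L M t s ↔ DomRel L' N (F t) (F s)) ∧
  (∀ t s, CodRel L M t s ↔ CodRel L' N (F t) (F s))

variable (L M)

/-- The automorphism group of the expanded structure `E^ex_M(k)`. -/
def exAut (k : ℕ∞) : Subgroup (Equiv.Perm (ExTriple L M k)) where
  carrier := {σ | IsExIso (σ : ExTriple L M k ≃ ExTriple L M k)}
  one_mem' := by
    refine ⟨fun t => ?_, fun n x => ?_, fun t s => ?_, fun t s => ?_⟩ <;>
      simp [Equiv.Perm.coe_one, Function.comp_def]
  mul_mem' := by
    rintro σ τ ⟨hσ1, hσ2, hσ3, hσ4⟩ ⟨hτ1, hτ2, hτ3, hτ4⟩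
    refine ⟨fun t => ?_, fun n x => ?_, fun t s => ?_, fun t s => ?_⟩
    · exact (hτ1 t).trans (hσ1 (τ t))
    · exact (hτ2 n x).trans (hσ2 n (τ ∘ x))
    · exact (hτ3 t s).trans (hσ3 (τ t) (τ s))
    · exact (hτ4 t s).trans (hσ4 (τ t) (τ s))
  inv_mem' := by
    rintro σ ⟨hσ1, hσ2, hσ3, hσ4⟩
    refine ⟨fun t => ?_, fun n x => ?_, fun t s => ?_, fun t s => ?_⟩
    · have := hσ1 (σ⁻¹ t); simpa using this.symm
    · have := hσ2 n (⇑(σ⁻¹) ∘ x)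
      have hx : ⇑σ ∘ ⇑(σ⁻¹) ∘ x = x := by
        funext i; simp
      rw [hx] at this
      exact this.symm
    · have := hσ3 (σ⁻¹ t) (σ⁻¹ s); simpa using this.symm
    · have := hσ4 (σ⁻¹ t) (σ⁻¹ s); simpa using this.symm

/-- The subgroup of topological automorphisms of a topological group. -/
def topMulAut (G : Type*) [Group G] [TopologicalSpace G] : Subgroup (MulAut G) where
  carrier := {α | Continuous (α : G → G) ∧ Continuous (α.symm : G → G)}
  one_mem' := ⟨continuous_id, continuous_id⟩
  mul_mem' := by
    rintro α β ⟨hα1, hα2⟩ ⟨hβ1, hβ2⟩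
    exact ⟨hα1.comp hβ1, hβ2.comp hα2⟩
  inv_mem' := by
    rintro α ⟨h1, h2⟩
    exact ⟨h2, h1⟩

/-- A group isomorphism between topological groups which is a homeomorphism. -/
def IsTopIso {G H : Type*} [Group G] [Group H] [TopologicalSpace G] [TopologicalSpace H]
    (e : G ≃* H) : Prop :=
  Continuous (e : G → H) ∧ Continuous (e.symm : H → G)

/-- The natural homomorphism from `Aut(M)` to the symmetric group on `M`. -/
def toPerm : (M ≃[L] M) →* Equiv.Perm M where
  toFun g := g.toEquiv
  map_one' := rfl
  map_mul' f g := Equiv.ext fun _ => rfl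

/-- The orbit equivalence relation on `n`-tuples. -/
def orbRel (n : ℕ) (x y : Fin n → M) : Prop := ∃ g : M ≃[L] M, ∀ i, g (x i) = y i

/-- The automorphism group of the orbital structure `E_M`: permutations of `M`
preserving each orbit equivalence relation. -/
def autOrbital : Subgroup (Equiv.Perm M) where
  carrier := {f | ∀ (n : ℕ) (x y : Fin n → M),
    orbRel L M n x y ↔ orbRel L M n (f ∘ x) (f ∘ y)}
  one_mem' := by intro n x y; simp [Equiv.Perm.coe_one]
  mul_mem' := by
    intro f g hf hg n x y
    exact (hg n x y).trans (hf n (g ∘ x) (g ∘ y))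
  inv_mem' := by
    intro f hf n x y
    have := hf n (⇑(f⁻¹) ∘ x) (⇑(f⁻¹) ∘ y)
    have hx : ⇑f ∘ ⇑(f⁻¹) ∘ x = x := by funext i; simp
    have hy : ⇑f ∘ ⇑(f⁻¹) ∘ y = y := by funext i; simp
    rw [hx, hy] at this
    exact this.symm

/-- `Aut°(E_M)`: automorphisms of the orbital structure preserving each orbit
equivalence class. -/
def autOrbitalFix : Subgroup (Equiv.Perm M) where
  carrier := {f | f ∈ autOrbital L M ∧ ∀ (n : ℕ) (x : Fin n → M), orbRel L M n x (f ∘ x)}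
  one_mem' := ⟨(autOrbital L M).one_mem, fun n x => ⟨1, fun i => by simp [Equiv.Perm.coe_one]⟩⟩
  mul_mem' := by
    rintro f g ⟨hf, hf2⟩ ⟨hg, hg2⟩
    refine ⟨(autOrbital L M).mul_mem hf hg, fun n x => ?_⟩
    obtain ⟨a, ha⟩ := hg2 n x
    obtain ⟨b, hb⟩ := hf2 n (g ∘ x)
    exact ⟨b * a, fun i => by rw [aut_mul_apply, ha i, hb i]; rfl⟩
  inv_mem' := by
    rintro f ⟨hf, hf2⟩
    refine ⟨(autOrbital L M).inv_mem hf, fun n x => ?_⟩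
    obtain ⟨a, ha⟩ := hf2 n (⇑(f⁻¹) ∘ x)
    refine ⟨a⁻¹, fun i => ?_⟩
    have hi := ha i
    simp only [Function.comp_apply, Equiv.Perm.coe_inv, Equiv.apply_symm_apply] at hi
    rw [← hi, aut_inv_apply, FirstOrder.Language.Equiv.symm_apply_apply]
    rfl

/-- A homogeneous structure: isomorphisms between finite substructures extend to
automorphisms. -/
def Homogeneous : Prop :=
  ∀ (K K' : Set M), K.Finite → K'.Finite → ∀ p : K ≃ K',
    IsPartialIso L M K K' p → ∃ g : M ≃[L] M, ∀ a : K, g a = (p a : M)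

/-- Weak elimination of imaginaries, phrased group-theoretically: every open subgroup is
sandwiched between the pointwise and setwise stabilizers of a unique smallest finite
Galois-algebraically closed set. -/
def HasWEI : Prop :=
  ∀ H : Subgroup (M ≃[L] M), IsOpen (H : Set (M ≃[L] M)) →
    ∃ K : Set M, (K.Finite ∧ aclg L M K = K ∧ pstab L M K ≤ H ∧ H ≤ sstab L M K) ∧
      ∀ K' : Set M, (K'.Finite ∧ aclg L M K' = K' ∧ pstab L M K' ≤ H ∧ H ≤ sstab L M K') →
        K ⊆ K'

/-- No algebraicity: every finite set is Galois-algebraically closed. -/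
def NoAlgebraicity : Prop := ∀ A : Set M, A.Finite → aclg L M A = A

/-- The small index property: every subgroup of index `< 2^ℵ₀` is open. -/
def SIP : Prop :=
  ∀ H : Subgroup (M ≃[L] M), Cardinal.mk ((M ≃[L] M) ⧸ H) < Cardinal.continuum →
    IsOpen (H : Set (M ≃[L] M))

/-- An oligomorphic action: finitely many orbits on `n`-tuples for every `n`. -/
def Oligo (G : Type*) [Group G] (X : Type*) [MulAction G X] : Prop :=
  ∀ n : ℕ, Finite (MulAction.orbitRel.Quotient G (Fin n → X))

end Paper

namespace Paper

/-- ω-categoricity: `M` is, up to isomorphism, the unique countable model of its complete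
first-order theory. -/
def IsOmegaCategorical (L : FirstOrder.Language) (M : Type w) [L.Structure M] : Prop :=
  Countable M ∧ ∀ (N : Type w) (iN : L.Structure N), Countable N → Nonempty N →
    (@FirstOrder.Language.Theory.Model L N iN (L.completeTheory M)) →
      Nonempty (@FirstOrder.Language.Equiv L N M iN _)


set_option linter.unusedSectionVars false
set_option linter.unusedVariables false
section AuxLemmas


variable (L : FirstOrder.Language) (M : Type*) [L.Structure M]
variable [L.Structure M]

section Aux

theorem mem_aclg_of_mem' {A : Set M} {a : M} (ha : a ∈ A) : a ∈ aclg L M A := by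
  apply Set.Finite.subset (Set.finite_singleton a)
  rintro _ ⟨g, rfl⟩
  show (g : M ≃[L] M) a ∈ ({a} : Set M)
  rw [g.2 a ha]
  exact rfl

theorem funMap_mem_aclg' {A : Set M} {n : ℕ} (f : L.Functions n) (x : Fin n → M)
    (hx : ∀ i, x i ∈ aclg L M A) :
    FirstOrder.Language.Structure.funMap f x ∈ aclg L M A := by
  have hfin : (Set.pi Set.univ fun i => MulAction.orbit (pstab L M A) (x i)).Finite :=
    Set.Finite.pi fun i => hx i
  apply (hfin.image fun y => FirstOrder.Language.Structure.funMap f y).subset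
  rintro _ ⟨g, rfl⟩
  refine ⟨fun i => (g : M ≃[L] M) (x i), fun i _ => ⟨g, rfl⟩, ?_⟩
  show _ = (g : M ≃[L] M) (FirstOrder.Language.Structure.funMap f x)
  rw [FirstOrder.Language.HomClass.map_fun]
  rfl

theorem orbit_finite_of_rel' {G X : Type*} [Group G] [MulAction G X]
    {S H : Subgroup G} (hle : H ≤ S) (hq : Finite (S ⧸ H.subgroupOf S))
    {b : X} (hb : (MulAction.orbit H b).Finite) :
    (MulAction.orbit S b).Finite := by
  haveI := hb.to_subtype
  apply (Set.finite_range fun p : (S ⧸ H.subgroupOf S) × (MulAction.orbit H b) =>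
    ((p.1.out : S) : G) • (p.2 : X)).subset
  rintro _ ⟨g, rfl⟩
  set q : S ⧸ H.subgroupOf S := (g : S ⧸ H.subgroupOf S) with hqdef
  have hmem : q.out⁻¹ * g ∈ H.subgroupOf S :=
    QuotientGroup.eq.mp (by rw [QuotientGroup.out_eq'])
  refine ⟨⟨q, ⟨((q.out⁻¹ * g : S) : G) • b, ?_⟩⟩, ?_⟩
  · exact ⟨⟨_, Subgroup.mem_subgroupOf.mp hmem⟩, rfl⟩
  · show ((q.out : S) : G) • _ = (g : G) • b
    rw [← mul_smul]
    congr 1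
    have : q.out * (q.out⁻¹ * g) = g := by group
    calc ((q.out : S) : G) * ((q.out⁻¹ * g : S) : G)
        = ((q.out * (q.out⁻¹ * g) : S) : G) := rfl
      _ = (g : G) := by rw [this]

theorem finite_quotient_pstab' (S : Subgroup (M ≃[L] M)) (K : Set M) (hKfin : K.Finite)
    (horb : ∀ a ∈ K, (MulAction.orbit S a).Finite) :
    Finite (S ⧸ (pstab L M K).subgroupOf S) := by
  haveI := hKfin.to_subtype
  haveI : ∀ a : K, Finite (MulAction.orbit S (a : M)) := fun a => (horb a a.2).to_subtype
  apply Finite.of_injective fun q : S ⧸ (pstab L M K).subgroupOf S =>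
    (fun a : K => (⟨q.out • (a : M), MulAction.mem_orbit _ _⟩ :
      MulAction.orbit S (a : M)))
  intro q₁ q₂ hq
  rw [← QuotientGroup.out_eq' q₁, ← QuotientGroup.out_eq' q₂]
  apply QuotientGroup.eq.mpr
  rw [Subgroup.mem_subgroupOf]
  intro a ha
  have h1 := congrFun hq ⟨a, ha⟩
  have h2 : q₁.out • a = q₂.out • a := congrArg Subtype.val h1
  show ((q₁.out⁻¹ * q₂.out : S) : M ≃[L] M) a = a
  have h3 : ((q₂.out : S) : M ≃[L] M) a = ((q₁.out : S) : M ≃[L] M) a := h2.symm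
  show (((q₁.out : S) : M ≃[L] M)⁻¹ * ((q₂.out : S) : M ≃[L] M)) a = a
  rw [aut_mul_apply, h3, ← aut_mul_apply, inv_mul_cancel, aut_one_apply]

theorem aclg_aclg' (h2 : ∀ A : Set M, A.Finite → (aclg L M A).Finite)
    {A : Set M} (hA : A.Finite) :
    aclg L M (aclg L M A) = aclg L M A := by
  apply Set.Subset.antisymm _ (fun a ha => mem_aclg_of_mem' L M ha)
  intro b hb
  have hle : pstab L M (aclg L M A) ≤ pstab L M A :=
    fun g hg a ha => hg a (mem_aclg_of_mem' L M ha)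
  have hq : Finite ((pstab L M A) ⧸ (pstab L M (aclg L M A)).subgroupOf (pstab L M A)) :=
    finite_quotient_pstab' L M (pstab L M A) (aclg L M A) (h2 A hA) (fun a ha => ha)
  exact orbit_finite_of_rel' hle hq hb

theorem pstab_le_genStab' (K : Set M) (Lsub : Subgroup (Equiv.Perm K)) :
    pstab L M K ≤ genStab L M K Lsub :=
  fun g hg => ⟨1, Lsub.one_mem, fun a => by simp [hg a a.2]⟩

theorem genStab_bot' (K : Set M) : genStab L M K ⊥ = pstab L M K := by
  apply le_antisymm _ (pstab_le_genStab' L M K ⊥)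
  rintro g ⟨p, hp, hgp⟩ a ha
  rw [Subgroup.mem_bot] at hp
  subst hp
  simpa using hgp ⟨a, ha⟩

theorem isPartialIso_one' (K : Set M)
    (hcl : ∀ {n : ℕ} (f : L.Functions n) (x : Fin n → K),
      FirstOrder.Language.Structure.funMap f (fun i => (x i : M)) ∈ K) :
    IsPartialIso L M K K ((1 : Equiv.Perm K) : K ≃ K) := by
  constructor
  · intro n f x
    refine ⟨hcl f x, ?_⟩
    simp
  · intro n r x
    simp

theorem pstab_mem_GS' {K : Set M} (hK : K ∈ AA L M) : pstab L M K ∈ GS L M := by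
  obtain ⟨A, hAfin, rfl⟩ := hK
  refine ⟨aclg L M A, ⟨A, hAfin, rfl⟩, ⊥, ?_, (genStab_bot' L M _).symm⟩
  intro p hp
  rw [Subgroup.mem_bot] at hp
  subst hp
  exact isPartialIso_one' L M _ (fun f x => funMap_mem_aclg' L M f _ (fun i => (x i).2))

end Aux


end AuxLemmas

/-- Under Hypothesis (H), the pointwise stabilizers of members of `A(M)`
are exactly the members of `GS(M)` with no proper normal subgroup of finite index
in `GS(M)`. -/
theorem stmt_11 (L : FirstOrder.Language) (M : Type*) [L.Structure M] (h : HypH L M) :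
    PS L M = {H ∈ GS L M | ¬∃ H' ∈ GS L M,
      H' < H ∧ (H'.subgroupOf H).Normal ∧ H'.relIndex H ≠ 0} := by
  ext H
  constructor
  · rintro ⟨K, hKAA, rfl⟩
    refine ⟨pstab_mem_GS' L M hKAA, ?_⟩
    rintro ⟨H', ⟨K₁, hK₁AA, L₁, hL₁iso, rfl⟩, hlt, hnorm, hrel⟩
    obtain ⟨A, hA, rfl⟩ := hKAA
    obtain ⟨A₁, hA₁, rfl⟩ := hK₁AA
    have hK₁fin : (aclg L M A₁).Finite := h.locallyFinite A₁ hA₁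
    have hle : genStab L M (aclg L M A₁) L₁ ≤ pstab L M (aclg L M A) := le_of_lt hlt
    have hq : Finite ((pstab L M (aclg L M A)) ⧸
        (genStab L M (aclg L M A₁) L₁).subgroupOf (pstab L M (aclg L M A))) :=
      (Nat.card_ne_zero.mp hrel).2
    have hsub : aclg L M A₁ ⊆ aclg L M A := by
      intro a ha
      have horb1 : (MulAction.orbit (genStab L M (aclg L M A₁) L₁) a).Finite := by
        apply hK₁fin.subset
        rintro _ ⟨g, rfl⟩
        obtain ⟨p, hp, hgp⟩ := g.2
        show (g : M ≃[L] M) a ∈ aclg L M A₁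
        rw [hgp ⟨a, ha⟩]
        exact (p ⟨a, ha⟩).2
      have h2 : (MulAction.orbit (pstab L M (aclg L M A)) a).Finite :=
        orbit_finite_of_rel' hle hq horb1
      have h3 : a ∈ aclg L M (aclg L M A) := h2
      rwa [aclg_aclg' L M h.locallyFinite hA] at h3
    have hge : pstab L M (aclg L M A) ≤ genStab L M (aclg L M A₁) L₁ :=
      fun g hg => ⟨1, L₁.one_mem, fun a => by simp [hg a (hsub a.2)]⟩
    exact absurd hge hlt.not_ge
  · rintro ⟨⟨K₁, hK₁AA, L₁, hL₁iso, rfl⟩, hno⟩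
    have hps : pstab L M K₁ ≤ genStab L M K₁ L₁ := pstab_le_genStab' L M K₁ L₁
    obtain ⟨A₁, hA₁, hKeq⟩ := hK₁AA
    have hK₁fin : K₁.Finite := by rw [hKeq]; exact h.locallyFinite A₁ hA₁
    have hGS' : pstab L M K₁ ∈ GS L M := pstab_mem_GS' L M ⟨A₁, hA₁, hKeq⟩
    have hmapsto : ∀ (g : genStab L M K₁ L₁) (a : M), a ∈ K₁ → (g : M ≃[L] M) a ∈ K₁ := by
      intro g a ha
      obtain ⟨p, hp, hgp⟩ := g.2
      rw [hgp ⟨a, ha⟩]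
      exact (p ⟨a, ha⟩).2
    have hnorm : ((pstab L M K₁).subgroupOf (genStab L M K₁ L₁)).Normal := by
      constructor
      intro nn hn g
      rw [Subgroup.mem_subgroupOf] at hn ⊢
      intro a ha
      have h1 : ((g : M ≃[L] M))⁻¹ a ∈ K₁ := hmapsto g⁻¹ a ha
      show ((g : M ≃[L] M) * (nn : M ≃[L] M) * ((g : M ≃[L] M))⁻¹) a = a
      rw [aut_mul_apply, aut_mul_apply, hn _ h1, ← aut_mul_apply, mul_inv_cancel,
        aut_one_apply]
    have hq : Finite ((genStab L M K₁ L₁) ⧸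
        (pstab L M K₁).subgroupOf (genStab L M K₁ L₁)) := by
      apply finite_quotient_pstab' L M _ K₁ hK₁fin
      intro a ha
      apply hK₁fin.subset
      rintro _ ⟨g, rfl⟩
      exact hmapsto g a ha
    have hrel : (pstab L M K₁).relIndex (genStab L M K₁ L₁) ≠ 0 :=
      Nat.card_ne_zero.mpr ⟨inferInstance, hq⟩
    rcases lt_or_eq_of_le hps with hlt | heq
    · exact absurd ⟨pstab L M K₁, hGS', hlt, hnorm, hrel⟩ hno
    · exact ⟨K₁, ⟨A₁, hA₁, hKeq⟩, heq.symm⟩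

end Paper
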